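/- Structure of optimal inexactness schedules (Theorem 3.6). Consider the master problem under Assumption B. Then there exist integers N⊕, N⊖ ∈ {0,…,N−1}, a real number λ*, and a bijection ρ of {0,…,N−1} such that ρ(k₁) < ρ(k₂) implies b_{k₁}/a_{k₁} ≥ b_{k₂}/a_{k₂} (ρ is a descending rank for the values ν_k = b_k/a_k), for which the vector δ* defined by: δ*_k = M·δ̄ whenever ρ(k) < N⊕; δ*_k = (h')⁻¹(λ*·a_k/b_k) whenever N⊕ ≤ ρ(k) ≤ N−1−N⊖ (in particular λ*·a_k/b_k lies in the range of h' for every such k); and δ*_k = m·δ̄ whenever ρ(k) > N−1−N⊖; satisfies the budget identity (∑_{k=0}^{N−1} b_k)·h(δ̄) − [h(M·δ̄)·∑_{k: ρ(k)<N⊕} b_k + h(m·δ̄)·∑_{k: ρ(k)>N−1−N⊖} b_k] = ∑_{k: N⊕≤ρ(k)≤N−1−N⊖} b_k·h((h')⁻¹(λ*·a_k/b_k)), and δ* is an optimal solution of the master problem. -/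

import Mathlib

open Finset


lemma aux_min_unique {A B : ℝ} {h h' : ℝ → ℝ}
    (hderiv : ∀ σ ∈ Set.Icc A B, HasDerivWithinAt h (h' σ) (Set.Icc A B) σ)
    (hmono : StrictMonoOn h' (Set.Ioo A B))
    {y σ₁ σ₂ : ℝ} (h1 : σ₁ ∈ Set.Icc A B) (h2 : σ₂ ∈ Set.Icc A B)
    (m1 : ∀ τ ∈ Set.Icc A B, h σ₁ - y * σ₁ ≤ h τ - y * τ)
    (m2 : ∀ τ ∈ Set.Icc A B, h σ₂ - y * σ₂ ≤ h τ - y * τ) : σ₁ = σ₂ := by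
  have hcont : ContinuousOn h (Set.Icc A B) := fun σ hσ => (hderiv σ hσ).continuousWithinAt
  have hFcont : ContinuousOn (fun t => h t - y * t) (Set.Icc A B) :=
    hcont.sub ((continuous_const.mul continuous_id).continuousOn)
  have hFder : ∀ σ ∈ Set.Ioo A B, HasDerivAt (fun t => h t - y * t) (h' σ - y) σ := by
    intro σ hσ
    have hd : HasDerivAt h (h' σ) σ :=
      (hderiv σ (Set.Ioo_subset_Icc_self hσ)).hasDerivAt (Icc_mem_nhds hσ.1 hσ.2)
    have := hd.sub ((hasDerivAt_id' σ).const_mul y)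
    rw [mul_one] at this
    exact this
  have key : ∀ τ₁ τ₂ : ℝ, τ₁ ∈ Set.Icc A B → τ₂ ∈ Set.Icc A B →
      (∀ τ ∈ Set.Icc A B, h τ₁ - y * τ₁ ≤ h τ - y * τ) →
      (∀ τ ∈ Set.Icc A B, h τ₂ - y * τ₂ ≤ h τ - y * τ) → ¬ τ₁ < τ₂ := by
    intro τ₁ τ₂ ht1 ht2 hm1 hm2 hlt
    set F : ℝ → ℝ := fun t => h t - y * t with hF
    have hsub : Set.Ioo τ₁ τ₂ ⊆ Set.Ioo A B := fun x hx =>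
      ⟨lt_of_le_of_lt ht1.1 hx.1, lt_of_lt_of_le hx.2 ht2.2⟩
    have heqv : F τ₁ = F τ₂ :=
      le_antisymm (hm1 τ₂ ht2) (hm2 τ₁ ht1)
    -- MVT on [τ₁, τ₂]
    obtain ⟨c, hc, hc'⟩ := exists_hasDerivAt_eq_slope F (fun t => h' t - y) hlt
      (hFcont.mono (Set.Icc_subset_Icc ht1.1 ht2.2))
      (fun x hx => hFder x (hsub hx))
    have hc0 : h' c - y = 0 := by
      rw [hc', heqv]; simp
    -- MVT on [c, τ₂]
    obtain ⟨c₂, hc₂, hc₂'⟩ := exists_hasDerivAt_eq_slope F (fun t => h' t - y) hc.2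
      (hFcont.mono (Set.Icc_subset_Icc (le_trans ht1.1 hc.1.le) ht2.2))
      (fun x hx => hFder x (hsub ⟨lt_trans hc.1 hx.1, hx.2⟩))
    have hcmem : c ∈ Set.Ioo A B := hsub hc
    have hc₂mem : c₂ ∈ Set.Ioo A B := hsub ⟨lt_trans hc.1 hc₂.1, hc₂.2⟩
    have hpos : 0 < h' c₂ - y := by
      have := hmono hcmem hc₂mem hc₂.1
      linarith
    have hnonpos : h' c₂ - y ≤ 0 := by
      rw [hc₂']
      apply div_nonpos_of_nonpos_of_nonneg
      · have h2le : F τ₂ ≤ F c := hm2 c (Set.Ioo_subset_Icc_self hcmem)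
        linarith
      · linarith [hc₂.1, hc.2]
    linarith
  rcases lt_trichotomy σ₁ σ₂ with hlt | heq | hgt
  · exact absurd hlt (key σ₁ σ₂ h1 h2 m1 m2)
  · exact heq
  · exact (absurd hgt (key σ₂ σ₁ h2 h1 m2 m1))

lemma aux_g_exists {A B : ℝ} (hAB : A < B) {h h' : ℝ → ℝ}
    (hderiv : ∀ σ ∈ Set.Icc A B, HasDerivWithinAt h (h' σ) (Set.Icc A B) σ)
    (hmono : StrictMonoOn h' (Set.Ioo A B)) :
    ∃ g : ℝ → ℝ, (∀ y, g y ∈ Set.Icc A B) ∧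
      (∀ y, ∀ τ ∈ Set.Icc A B, h (g y) - y * g y ≤ h τ - y * τ) ∧
      Continuous g ∧ Monotone g ∧
      (∀ y, g y ∈ Set.Ioo A B → h' (g y) = y) ∧
      (∀ y σ0, σ0 ∈ Set.Ioo A B → y < h' σ0 → g y ≤ σ0) := by
  have hcont : ContinuousOn h (Set.Icc A B) := fun σ hσ => (hderiv σ hσ).continuousWithinAt
  have hFcont : ∀ y : ℝ, ContinuousOn (fun t => h t - y * t) (Set.Icc A B) := fun y =>
    hcont.sub ((continuous_const.mul continuous_id).continuousOn)
  have hFder : ∀ (y : ℝ), ∀ σ ∈ Set.Ioo A B, HasDerivAt (fun t => h t - y * t) (h' σ - y) σ := by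
    intro y σ hσ
    have hd : HasDerivAt h (h' σ) σ :=
      (hderiv σ (Set.Ioo_subset_Icc_self hσ)).hasDerivAt (Icc_mem_nhds hσ.1 hσ.2)
    have := hd.sub ((hasDerivAt_id' σ).const_mul y)
    rw [mul_one] at this
    exact this
  have exmin : ∀ y : ℝ, ∃ σ, σ ∈ Set.Icc A B ∧
      ∀ τ ∈ Set.Icc A B, h σ - y * σ ≤ h τ - y * τ := by
    intro y
    obtain ⟨σ, hσ, hmin⟩ := isCompact_Icc.exists_isMinOn (Set.nonempty_Icc.mpr hAB.le) (hFcont y)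
    exact ⟨σ, hσ, fun τ hτ => hmin hτ⟩
  choose g g_mem g_min using exmin
  have g_uniq : ∀ (y σ : ℝ), σ ∈ Set.Icc A B →
      (∀ τ ∈ Set.Icc A B, h σ - y * σ ≤ h τ - y * τ) → σ = g y := fun y σ hσ hminσ =>
    aux_min_unique hderiv hmono hσ (g_mem y) hminσ (g_min y)
  have g_mono : Monotone g := by
    intro y₁ y₂ hy
    rcases eq_or_lt_of_le hy with rfl | hlt
    · exact le_rfl
    · by_contra hgt
      push_neg at hgt
      have e1 := g_min y₁ (g y₂) (g_mem y₂)
      have e2 := g_min y₂ (g y₁) (g_mem y₁)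
      nlinarith [mul_pos (sub_pos.mpr hlt) (sub_pos.mpr hgt), e1, e2]
  have g_cont : Continuous g := by
    rw [Metric.continuous_iff]
    intro y0 ε hε
    set g0 := g y0 with hg0
    set K := Set.Icc A B ∩ {σ : ℝ | ε ≤ |σ - g0|} with hK
    by_cases hKne : K.Nonempty
    · have hKclosed : IsClosed {σ : ℝ | ε ≤ |σ - g0|} :=
        isClosed_le continuous_const ((continuous_id.sub continuous_const).abs)
      have hKcomp : IsCompact K := isCompact_Icc.inter_right hKclosed
      obtain ⟨σc, hσcK, hσcmin⟩ := hKcomp.exists_isMinOn hKne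
        ((hFcont y0).mono Set.inter_subset_left)
      have hc_pos : 0 < (h σc - y0 * σc) - (h g0 - y0 * g0) := by
        rcases lt_or_eq_of_le (g_min y0 σc hσcK.1) with hlt | heq
        · linarith
        · exfalso
          have : σc = g y0 := by
            apply g_uniq y0 σc hσcK.1
            intro τ hτ
            rw [← heq]
            exact g_min y0 τ hτ
          have hne : ε ≤ |σc - g0| := hσcK.2
          rw [this] at hne
          rw [← hg0, sub_self, abs_zero] at hne
          linarith
      set c := (h σc - y0 * σc) - (h g0 - y0 * g0) with hc
      set Bb := max |A| |B| with hBb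
      have habs : ∀ σ ∈ Set.Icc A B, |σ| ≤ Bb := by
        intro σ hσ
        rw [abs_le]
        constructor
        · calc -Bb ≤ -|A| := by simp [hBb]
            _ ≤ A := neg_abs_le A
            _ ≤ σ := hσ.1
        · calc σ ≤ B := hσ.2
            _ ≤ |B| := le_abs_self B
            _ ≤ Bb := le_max_right _ _
      have hBb1 : 0 < Bb + 1 := by positivity
      refine ⟨c / (2 * (Bb + 1)), by positivity, ?_⟩
      intro y hyd
      have key : g y ∉ K := by
        intro hgyK
        have e1 : h σc - y0 * σc ≤ h (g y) - y0 * (g y) := hσcmin hgyK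
        have e2 : h (g y) - y * (g y) ≤ h g0 - y * g0 := g_min y g0 (g_mem y0)
        have e3 : |(y - y0) * (g y)| < c / 2 := by
          rw [abs_mul]
          calc |y - y0| * |g y| ≤ |y - y0| * (Bb + 1) := by
                have := habs (g y) (g_mem y)
                nlinarith [abs_nonneg (y - y0)]
            _ < (c / (2 * (Bb + 1))) * (Bb + 1) := by
                apply mul_lt_mul_of_pos_right _ hBb1
                rw [Real.dist_eq] at hyd; exact hyd
            _ = c / 2 := by field_simp
        have e4 : |(y - y0) * g0| < c / 2 := by
          rw [abs_mul]
          calc |y - y0| * |g0| ≤ |y - y0| * (Bb + 1) := by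
                have := habs g0 (g_mem y0)
                nlinarith [abs_nonneg (y - y0)]
            _ < (c / (2 * (Bb + 1))) * (Bb + 1) := by
                apply mul_lt_mul_of_pos_right _ hBb1
                rw [Real.dist_eq] at hyd; exact hyd
            _ = c / 2 := by field_simp
        have l3 := le_abs_self ((y - y0) * (g y))
        have l3' := neg_abs_le ((y - y0) * (g y))
        have l4 := le_abs_self ((y - y0) * g0)
        have l4' := neg_abs_le ((y - y0) * g0)
        nlinarith [e1, e2, e3, e4]
      have : ¬ ε ≤ |g y - g0| := fun hcon => key ⟨g_mem y, hcon⟩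
      rw [Real.dist_eq]
      linarith [not_le.mp this]
    · refine ⟨1, one_pos, fun y _ => ?_⟩
      have : g y ∉ K := fun hyK => hKne ⟨g y, hyK⟩
      have : ¬ ε ≤ |g y - g0| := fun hcon => this ⟨g_mem y, hcon⟩
      rw [Real.dist_eq]
      linarith [not_le.mp this]
  have g_stat : ∀ y, g y ∈ Set.Ioo A B → h' (g y) = y := by
    intro y hy
    have hminon : IsMinOn (fun t => h t - y * t) (Set.Icc A B) (g y) :=
      isMinOn_iff.mpr (fun τ hτ => g_min y τ hτ)
    have hloc : IsLocalMin (fun t => h t - y * t) (g y) :=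
      hminon.isLocalMin (Icc_mem_nhds hy.1 hy.2)
    have := hloc.hasDerivAt_eq_zero (hFder y (g y) hy)
    linarith
  have g_le : ∀ y σ0, σ0 ∈ Set.Ioo A B → y < h' σ0 → g y ≤ σ0 := by
    intro y σ0 hσ0 hylt
    by_contra hgt
    push_neg at hgt
    have hmem : g y ∈ Set.Icc A B := g_mem y
    obtain ⟨cc, hcc, hcc'⟩ := exists_hasDerivAt_eq_slope (fun t => h t - y * t)
      (fun t => h' t - y) hgt
      ((hFcont y).mono (Set.Icc_subset_Icc hσ0.1.le hmem.2))
      (fun x hx => hFder y x ⟨lt_trans hσ0.1 hx.1, lt_of_lt_of_le hx.2 hmem.2⟩)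
    have hccmem : cc ∈ Set.Ioo A B := ⟨lt_trans hσ0.1 hcc.1, lt_of_lt_of_le hcc.2 hmem.2⟩
    have hpos : 0 < h' cc - y := by
      have := hmono hσ0 hccmem hcc.1
      linarith
    have hnonpos : h' cc - y ≤ 0 := by
      rw [hcc']
      apply div_nonpos_of_nonpos_of_nonneg
      · have := g_min y σ0 (Set.Ioo_subset_Icc_self hσ0)
        linarith
      · linarith [hcc.1, hσ0.1]
    linarith
  exact ⟨g, g_mem, g_min, g_cont, g_mono, g_stat, g_le⟩

/-- Structure of optimal inexactness schedules (Theorem 3.6). -/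
theorem structure_optimal_schedule
    (N : ℕ) (hN : 0 < N) (δbar m M : ℝ)
    (hδbar : 0 < δbar) (hm : 0 ≤ m) (hm1 : m < 1) (hM : 1 < M)
    (a b : Fin N → ℝ) (ha : ∀ k, 0 < a k) (hb : ∀ k, 0 < b k)
    (h h' : ℝ → ℝ)
    (h_nonneg : ∀ σ ∈ Set.Icc (m * δbar) (M * δbar), 0 ≤ h σ)
    (h_deriv : ∀ σ ∈ Set.Icc (m * δbar) (M * δbar),
      HasDerivWithinAt h (h' σ) (Set.Icc (m * δbar) (M * δbar)) σ)
    (h_anti : StrictAntiOn h (Set.Icc (m * δbar) (M * δbar)))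
    (h'_neg : ∀ σ ∈ Set.Ioo (m * δbar) (M * δbar), h' σ < 0)
    (h'_mono : StrictMonoOn h' (Set.Ioo (m * δbar) (M * δbar)))
    (h'_inj : Set.InjOn h' (Set.Icc (m * δbar) (M * δbar))) :
    ∃ Nplus Nminus : ℕ, Nplus ≤ N - 1 ∧ Nminus ≤ N - 1 ∧
    ∃ lam : ℝ, ∃ ρ : Equiv.Perm (Fin N),
      (∀ k₁ k₂ : Fin N, ρ k₁ < ρ k₂ → b k₂ / a k₂ ≤ b k₁ / a k₁) ∧
      ∃ δstar : Fin N → ℝ,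
        -- the three regimes of the schedule
        (∀ k, (ρ k : ℕ) < Nplus → δstar k = M * δbar) ∧
        (∀ k, Nplus ≤ (ρ k : ℕ) → (ρ k : ℕ) ≤ N - 1 - Nminus →
          -- δstar k = (h')⁻¹ (lam * a k / b k), i.e. lam * a k / b k
          -- lies in the range of h' and δstar k is its preimage
          δstar k ∈ Set.Icc (m * δbar) (M * δbar) ∧
          h' (δstar k) = lam * a k / b k) ∧
        (∀ k, N - 1 - Nminus < (ρ k : ℕ) → δstar k = m * δbar) ∧
        -- the budget identity
        ((∑ k, b k) * h δbar -
            (h (M * δbar) * ∑ k ∈ univ.filter (fun k => (ρ k : ℕ) < Nplus), b k +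
             h (m * δbar) * ∑ k ∈ univ.filter (fun k => N - 1 - Nminus < (ρ k : ℕ)), b k)
          = ∑ k ∈ univ.filter
              (fun k => Nplus ≤ (ρ k : ℕ) ∧ (ρ k : ℕ) ≤ N - 1 - Nminus),
              b k * h (δstar k)) ∧
        -- δstar is an optimal solution of the master problem
        (∀ k, δstar k ∈ Set.Icc (m * δbar) (M * δbar)) ∧
        (∑ k, b k * h (δstar k) = (∑ k, b k) * h δbar) ∧
        (∀ δ : Fin N → ℝ, (∀ k, δ k ∈ Set.Icc (m * δbar) (M * δbar)) →
          (∑ k, b k * h (δ k) = (∑ k, b k) * h δbar) →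
          ∑ k, a k * δstar k ≤ ∑ k, a k * δ k) := by
  have hnuniv : (univ : Finset (Fin N)).Nonempty := univ_nonempty_iff.mpr (Fin.pos_iff_nonempty.mp hN)
  set A := m * δbar with hA
  set B := M * δbar with hB
  have hAδ : A < δbar := by rw [hA]; nlinarith
  have hδB : δbar < B := by rw [hB]; nlinarith
  have hAB : A < B := hAδ.trans hδB
  have hδmem : δbar ∈ Set.Icc A B := ⟨hAδ.le, hδB.le⟩
  have hcont : ContinuousOn h (Set.Icc A B) := fun σ hσ => (h_deriv σ hσ).continuousWithinAt
  obtain ⟨g, g_mem, g_min, g_cont, g_mono, g_stat, g_le⟩ := aux_g_exists hAB h_deriv h'_mono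
  -- g 0 = B
  have hBmem : B ∈ Set.Icc A B := ⟨hAB.le, le_rfl⟩
  have hAmem : A ∈ Set.Icc A B := ⟨le_rfl, hAB.le⟩
  have hg0 : g 0 = B := by
    apply aux_min_unique h_deriv h'_mono (g_mem 0) hBmem (g_min 0)
    intro τ hτ
    rcases eq_or_lt_of_le hτ.2 with heq | hlt
    · rw [heq]
    · have := h_anti hτ hBmem hlt
      nlinarith
  set ν : Fin N → ℝ := fun k => a k / b k with hνdef
  have hν : ∀ k, 0 < ν k := fun k => div_pos (ha k) (hb k)
  set Φ : ℝ → ℝ := fun μ => ∑ k, b k * h (g (μ * ν k)) with hΦdef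
  have hΦcont : Continuous Φ := by
    apply continuous_finset_sum
    intro k _
    exact continuous_const.mul ((hcont.comp_continuous g_cont g_mem).comp
      (continuous_id.mul continuous_const))
  set C := (∑ k, b k) * h δbar with hCdef
  have hC : C = ∑ k, b k * h δbar := by
    rw [hCdef, Finset.sum_mul]
  have hsumβ : ∑ k, b k * h B < C := by
    rw [hC]
    apply Finset.sum_lt_sum_of_nonempty hnuniv
    intro k _
    exact mul_lt_mul_of_pos_left (h_anti hδmem hBmem hδB) (hb k)
  have hsumα : C < ∑ k, b k * h A := by
    rw [hC]
    apply Finset.sum_lt_sum_of_nonempty hnuniv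
    intro k _
    exact mul_lt_mul_of_pos_left (h_anti hAmem hδmem hAδ) (hb k)
  have hΦ0 : Φ 0 < C := by
    have : Φ 0 = ∑ k, b k * h B := by
      apply Finset.sum_congr rfl
      intro k _
      rw [zero_mul, hg0]
    rw [this]; exact hsumβ
  -- lower end for the IVT
  set σ0 := (A + δbar) / 2 with hσ0def
  have hσ0 : σ0 ∈ Set.Ioo A B := ⟨by rw [hσ0def]; linarith, by rw [hσ0def]; linarith⟩
  have hσ0δ : σ0 < δbar := by rw [hσ0def]; linarith
  have hσ0neg : h' σ0 < 0 := h'_neg σ0 hσ0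
  set μ0 := (univ.inf' hnuniv fun k => h' σ0 / ν k) - 1 with hμ0def
  have hμ0k : ∀ k, μ0 * ν k < h' σ0 := by
    intro k
    have h1 : (univ.inf' hnuniv fun k => h' σ0 / ν k) ≤ h' σ0 / ν k :=
      Finset.inf'_le _ (mem_univ k)
    have : μ0 < h' σ0 / ν k := by rw [hμ0def]; linarith
    exact (lt_div_iff₀ (hν k)).mp this
  have hμ0neg : μ0 < 0 := by
    obtain ⟨k0⟩ := Fin.pos_iff_nonempty.mp hN
    have h1 : (univ.inf' hnuniv fun k => h' σ0 / ν k) ≤ h' σ0 / ν k0 :=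
      Finset.inf'_le _ (mem_univ k0)
    have h2 : h' σ0 / ν k0 < 0 := div_neg_of_neg_of_pos hσ0neg (hν k0)
    rw [hμ0def]; linarith
  have hΦμ0 : C ≤ Φ μ0 := by
    rw [hC]
    apply Finset.sum_le_sum
    intro k _
    have hle : g (μ0 * ν k) ≤ σ0 := g_le _ σ0 hσ0 (hμ0k k)
    have h1 : h σ0 ≤ h (g (μ0 * ν k)) := by
      rcases eq_or_lt_of_le hle with heq | hlt
      · rw [heq]
      · exact (h_anti (g_mem _) (Set.Ioo_subset_Icc_self hσ0) hlt).le
    have h2 : h δbar < h σ0 := h_anti (Set.Ioo_subset_Icc_self hσ0) hδmem hσ0δ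
    nlinarith [hb k]
  -- intermediate value theorem
  obtain ⟨μ, hμmem, hΦμ⟩ := intermediate_value_Icc' hμ0neg.le hΦcont.continuousOn
    (Set.mem_Icc.mpr ⟨hΦ0.le, hΦμ0⟩)
  have hμneg : μ < 0 := by
    rcases eq_or_lt_of_le hμmem.2 with heq | hlt
    · exfalso; rw [heq] at hΦμ; rw [hΦμ] at hΦ0; exact lt_irrefl _ hΦ0
    · exact hlt
  set δstar : Fin N → ℝ := fun k => g (μ * ν k) with hδstardef
  have feas : ∑ k, b k * h (δstar k) = C := hΦμ
  have dmem : ∀ k, δstar k ∈ Set.Icc A B := fun k => g_mem _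
  -- permutation
  set w : Fin N → ℝ := fun k => b k / a k with hwdef
  set τp := Tuple.sort w with hτpdef
  set ρ : Equiv.Perm (Fin N) := τp.symm.trans (Fin.revPerm) with hρdef
  have hρ : ∀ k₁ k₂ : Fin N, ρ k₁ < ρ k₂ → w k₂ ≤ w k₁ := by
    intro k₁ k₂ hlt
    have h1 : (τp.symm k₁).rev < (τp.symm k₂).rev := hlt
    have h2 : τp.symm k₂ < τp.symm k₁ := Fin.rev_lt_rev.mp h1
    have h3 := Tuple.monotone_sort w h2.le
    simpa [hτpdef] using h3
  have hmono_k : ∀ k₁ k₂ : Fin N, w k₂ ≤ w k₁ → δstar k₂ ≤ δstar k₁ := by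
    intro k₁ k₂ hw
    have hw1 : 0 < w k₁ := div_pos (hb k₁) (ha k₁)
    have hw2 : 0 < w k₂ := div_pos (hb k₂) (ha k₂)
    have hinv : (w k₁)⁻¹ ≤ (w k₂)⁻¹ := inv_anti₀ hw2 hw
    have hν12 : ν k₁ ≤ ν k₂ := by
      show a k₁ / b k₁ ≤ a k₂ / b k₂
      rw [← inv_div (b k₁) (a k₁), ← inv_div (b k₂) (a k₂)]
      exact hinv
    have : μ * ν k₂ ≤ μ * ν k₁ := mul_le_mul_of_nonpos_left hν12 hμneg.le
    exact g_mono this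
  have hrank : ∀ j₁ j₂ : Fin N, j₁ ≤ j₂ → δstar (ρ.symm j₂) ≤ δstar (ρ.symm j₁) := by
    intro j₁ j₂ hj
    rcases eq_or_lt_of_le hj with heq | hlt
    · rw [heq]
    · apply hmono_k
      apply hρ
      rw [Equiv.apply_symm_apply, Equiv.apply_symm_apply]
      exact hlt
  -- counting sets
  set Tβ := univ.filter (fun j : Fin N => δstar (ρ.symm j) = B) with hTβdef
  set Tα := univ.filter (fun j : Fin N => δstar (ρ.symm j) = A) with hTαdef
  set Nplus := Tβ.card with hNplusdef
  set Nminus := Tα.card with hNminusdef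
  have hdcβ : ∀ i j : Fin N, i ≤ j → j ∈ Tβ → i ∈ Tβ := by
    intro i j hij hj
    rw [hTβdef, mem_filter] at hj ⊢
    refine ⟨mem_univ i, le_antisymm (dmem _).2 ?_⟩
    rw [← hj.2]
    exact hrank i j hij
  have hucα : ∀ i j : Fin N, i ≤ j → i ∈ Tα → j ∈ Tα := by
    intro i j hij hi
    rw [hTαdef, mem_filter] at hi ⊢
    refine ⟨mem_univ j, le_antisymm ?_ (dmem _).1⟩
    rw [← hi.2]
    exact hrank i j hij
  have hTβ_iff : ∀ j : Fin N, j ∈ Tβ ↔ (j : ℕ) < Nplus := by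
    intro j
    constructor
    · intro hj
      have hsub : Finset.Iic j ⊆ Tβ := fun i hi => hdcβ i j (Finset.mem_Iic.mp hi) hj
      have := Finset.card_le_card hsub
      rw [Fin.card_Iic] at this
      omega
    · intro hj
      by_contra hnj
      have hsub : Tβ ⊆ Finset.Iio j := by
        intro i hi
        rw [Finset.mem_Iio]
        by_contra hge
        exact hnj (hdcβ j i (not_lt.mp hge) hi)
      have := Finset.card_le_card hsub
      rw [Fin.card_Iio] at this
      omega
  have hTα_iff : ∀ j : Fin N, j ∈ Tα ↔ N - 1 - (j : ℕ) < Nminus := by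
    intro j
    constructor
    · intro hj
      have hsub : Finset.Ici j ⊆ Tα := fun i hi => hucα j i (Finset.mem_Ici.mp hi) hj
      have := Finset.card_le_card hsub
      rw [Fin.card_Ici] at this
      have := j.isLt
      omega
    · intro hj
      by_contra hnj
      have hsub : Tα ⊆ Finset.Ioi j := by
        intro i hi
        rw [Finset.mem_Ioi]
        by_contra hge
        exact hnj (hucα i j (not_lt.mp hge) hi)
      have := Finset.card_le_card hsub
      rw [Fin.card_Ioi] at this
      omega
  have hβ_iff : ∀ k, δstar k = B ↔ (ρ k : ℕ) < Nplus := by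
    intro k
    rw [← hTβ_iff (ρ k), hTβdef, mem_filter, Equiv.symm_apply_apply]
    simp
  have hα_iff : ∀ k, δstar k = A ↔ N - 1 - (ρ k : ℕ) < Nminus := by
    intro k
    rw [← hTα_iff (ρ k), hTαdef, mem_filter, Equiv.symm_apply_apply]
    simp
  -- Nplus, Nminus ≤ N - 1
  have hNple : Nplus ≤ N := by
    rw [hNplusdef]
    calc Tβ.card ≤ (univ : Finset (Fin N)).card := Finset.card_le_univ _
      _ = N := Finset.card_fin N
  have hNmle : Nminus ≤ N := by
    rw [hNminusdef]
    calc Tα.card ≤ (univ : Finset (Fin N)).card := Finset.card_le_univ _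
      _ = N := Finset.card_fin N
  have hNp : Nplus ≤ N - 1 := by
    rcases eq_or_lt_of_le hNple with heq | hlt
    · exfalso
      have hall : ∀ k, δstar k = B := by
        intro k
        apply (hβ_iff k).mpr
        have := (ρ k).isLt
        omega
      have : ∑ k, b k * h (δstar k) = ∑ k, b k * h B :=
        Finset.sum_congr rfl (fun k _ => by rw [hall k])
      rw [feas] at this
      linarith [hsumβ, this.symm.le]
    · omega
  have hNm : Nminus ≤ N - 1 := by
    rcases eq_or_lt_of_le hNmle with heq | hlt
    · exfalso
      have hall : ∀ k, δstar k = A := by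
        intro k
        apply (hα_iff k).mpr
        have := (ρ k).isLt
        omega
      have : ∑ k, b k * h (δstar k) = ∑ k, b k * h A :=
        Finset.sum_congr rfl (fun k _ => by rw [hall k])
      rw [feas] at this
      linarith [hsumα, this.symm.le]
    · omega
  have hQ_iff : ∀ k, δstar k = A ↔ N - 1 - Nminus < (ρ k : ℕ) := by
    intro k
    rw [hα_iff k]
    have := (ρ k).isLt
    omega
  have hmid : ∀ k, Nplus ≤ (ρ k : ℕ) → (ρ k : ℕ) ≤ N - 1 - Nminus →
      δstar k ∈ Set.Ioo A B := by
    intro k h1 h2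
    have hneB : δstar k ≠ B := fun hc => by
      have := (hβ_iff k).mp hc; omega
    have hneA : δstar k ≠ A := fun hc => by
      have := (hQ_iff k).mp hc; omega
    exact ⟨lt_of_le_of_ne (dmem k).1 (Ne.symm hneA), lt_of_le_of_ne (dmem k).2 hneB⟩
  -- budget identity
  have split1 := Finset.sum_filter_add_sum_filter_not univ
    (fun k : Fin N => (ρ k : ℕ) < Nplus) (fun k => b k * h (δstar k))
  have split2 := Finset.sum_filter_add_sum_filter_not
    (univ.filter (fun k : Fin N => ¬ (ρ k : ℕ) < Nplus))
    (fun k : Fin N => N - 1 - Nminus < (ρ k : ℕ)) (fun k => b k * h (δstar k))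
  have eqP : ∑ k ∈ univ.filter (fun k : Fin N => (ρ k : ℕ) < Nplus), b k * h (δstar k)
      = h B * ∑ k ∈ univ.filter (fun k : Fin N => (ρ k : ℕ) < Nplus), b k := by
    rw [Finset.mul_sum]
    apply Finset.sum_congr rfl
    intro k hk
    rw [(hβ_iff k).mpr (mem_filter.mp hk).2]
    ring
  have eqQfilter : (univ.filter (fun k : Fin N => ¬ (ρ k : ℕ) < Nplus)).filter
      (fun k : Fin N => N - 1 - Nminus < (ρ k : ℕ))
      = univ.filter (fun k : Fin N => N - 1 - Nminus < (ρ k : ℕ)) := by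
    rw [Finset.filter_filter]
    ext k
    simp only [mem_filter, mem_univ, true_and]
    constructor
    · exact fun hk => hk.2
    · intro hk
      refine ⟨fun hP => ?_, hk⟩
      have h1 : δstar k = A := (hQ_iff k).mpr hk
      have h2 : δstar k = B := (hβ_iff k).mpr hP
      exact hAB.ne (h1 ▸ h2)
  have eqQ : ∑ k ∈ univ.filter (fun k : Fin N => N - 1 - Nminus < (ρ k : ℕ)), b k * h (δstar k)
      = h A * ∑ k ∈ univ.filter (fun k : Fin N => N - 1 - Nminus < (ρ k : ℕ)), b k := by
    rw [Finset.mul_sum]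
    apply Finset.sum_congr rfl
    intro k hk
    rw [(hQ_iff k).mpr (mem_filter.mp hk).2]
    ring
  have eqMidSet : (univ.filter (fun k : Fin N => ¬ (ρ k : ℕ) < Nplus)).filter
      (fun k : Fin N => ¬ N - 1 - Nminus < (ρ k : ℕ))
      = univ.filter (fun k : Fin N => Nplus ≤ (ρ k : ℕ) ∧ (ρ k : ℕ) ≤ N - 1 - Nminus) := by
    rw [Finset.filter_filter]
    ext k
    simp [not_lt]
  have budget : C - (h B * ∑ k ∈ univ.filter (fun k : Fin N => (ρ k : ℕ) < Nplus), b k +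
      h A * ∑ k ∈ univ.filter (fun k : Fin N => N - 1 - Nminus < (ρ k : ℕ)), b k)
      = ∑ k ∈ univ.filter
          (fun k : Fin N => Nplus ≤ (ρ k : ℕ) ∧ (ρ k : ℕ) ≤ N - 1 - Nminus),
          b k * h (δstar k) := by
    rw [eqQfilter, eqMidSet] at split2
    rw [feas] at split1
    linarith [eqP, eqQ, split1, split2]
  -- optimality
  have optimal : ∀ δ : Fin N → ℝ, (∀ k, δ k ∈ Set.Icc A B) →
      (∑ k, b k * h (δ k) = C) → ∑ k, a k * δstar k ≤ ∑ k, a k * δ k := by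
    intro δ hδmem' hδfeas
    have key : ∀ k, b k * h (δstar k) - μ * (a k * δstar k)
        ≤ b k * h (δ k) - μ * (a k * δ k) := by
      intro k
      have hgm := g_min (μ * ν k) (δ k) (hδmem' k)
      have h2 := mul_le_mul_of_nonneg_left hgm (hb k).le
      have e : ∀ t : ℝ, b k * (h t - (μ * ν k) * t) = b k * h t - μ * (a k * t) := by
        intro t
        have hbne : b k ≠ 0 := (hb k).ne'
        show b k * (h t - (μ * (a k / b k)) * t) = b k * h t - μ * (a k * t)
        field_simp
      rw [e, e] at h2
      exact h2
    have hsum := Finset.sum_le_sum (fun k (_ : k ∈ univ) => key k)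
    rw [Finset.sum_sub_distrib, Finset.sum_sub_distrib, ← Finset.mul_sum, ← Finset.mul_sum,
      feas, hδfeas] at hsum
    have hmul : μ * ∑ k, a k * δ k ≤ μ * ∑ k, a k * δstar k := by linarith
    exact (mul_le_mul_left_of_neg hμneg).mp hmul
  refine ⟨Nplus, Nminus, hNp, hNm, μ, ρ, hρ, δstar,
    fun k hk => (hβ_iff k).mpr hk, ?_, fun k hk => (hQ_iff k).mpr hk, budget, dmem,
    by rw [feas, hCdef], fun δ h1 h2 => optimal δ h1 (by rw [h2, hCdef])⟩
  intro k h1 h2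
  refine ⟨dmem k, ?_⟩
  have hst := g_stat (μ * ν k) (hmid k h1 h2)
  show h' (g (μ * ν k)) = μ * a k / b k
  rw [hst, mul_div_assoc]
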